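/- Let $p$ be a subharmonic nonharmonic polynomial of degree $d$, and let $\mathcal{Y}$ be any one of the vector fields $L_z, \bar L_z, \mathcal{L}_w, \bar{\mathcal{L}}_w$. Then there is a constant $C$ depending only on $d$ such that $|\mathcal{Y}(t + T(w,z))| \le C\,\Lambda(z, d_{NI}(z,w,t))/d_{NI}(z,w,t)$ for all $z \ne w$ and $t \in \mathbb{R}$. -/

import Mathlib

open Finset Complex

/-- The coefficient `A_{jk}(z) = (1/(j!k!)) ∂^{j+k}p/∂z^j∂z̄^k (z)` of the
polynomial `p(z) = ∑_{m,n ≤ d} a m n · z^m · z̄^n`. -/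
noncomputable def Acoef (d : ℕ) (a : ℕ → ℕ → ℂ) (j k : ℕ) (z : ℂ) : ℂ :=
  ∑ m ∈ Finset.range (d + 1), ∑ n ∈ Finset.range (d + 1),
    (m.choose j : ℂ) * (n.choose k : ℂ) * a m n * z ^ (m - j) * (starRingEnd ℂ z) ^ (n - k)

/-- The twist `T(w,z) = -2 Im (∑_{j≥1} (1/j!) ∂^j p/∂z^j (z) (w-z)^j)`. -/
noncomputable def Twist (d : ℕ) (a : ℕ → ℕ → ℂ) (w z : ℂ) : ℝ :=
  -2 * (∑ j ∈ Finset.Icc 1 d, Acoef d a j 0 z * (w - z) ^ j).im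

/-- `Λ(z,δ) = ∑_{j,k ≥ 1} |A_{jk}(z)| δ^{j+k}`. -/
noncomputable def Lam (d : ℕ) (a : ℕ → ℕ → ℂ) (z : ℂ) (δ : ℝ) : ℝ :=
  ∑ j ∈ Finset.Icc 1 d, ∑ k ∈ Finset.Icc 1 d,
    Norm.norm (Acoef d a j k z) * δ ^ (j + k)

/-- `μ(z,δ) = inf_{j,k ≥ 1, A_{jk}(z) ≠ 0} (|δ|/|A_{jk}(z)|)^{1/(j+k)}`. -/
noncomputable def muF (d : ℕ) (a : ℕ → ℕ → ℂ) (z : ℂ) (δ : ℝ) : ℝ :=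
  sInf {x : ℝ | ∃ j k : ℕ, 1 ≤ j ∧ 1 ≤ k ∧ Acoef d a j k z ≠ 0 ∧
    x = (|δ| / Norm.norm (Acoef d a j k z)) ^ (1 / ((j : ℝ) + (k : ℝ)))}

/-- The Wirtinger derivative `∂f/∂z = (1/2)(∂f/∂x - i ∂f/∂y)`. -/
noncomputable def wDz (f : ℂ → ℂ) (z : ℂ) : ℂ :=
  (fderiv ℝ f z 1 - Complex.I * fderiv ℝ f z Complex.I) / 2

/-- The Wirtinger derivative `∂f/∂z̄ = (1/2)(∂f/∂x + i ∂f/∂y)`. -/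
noncomputable def wDzbar (f : ℂ → ℂ) (z : ℂ) : ℂ :=
  (fderiv ℝ f z 1 + Complex.I * fderiv ℝ f z Complex.I) / 2

/-- The nonisotropic pseudodistance `d_{NI}(z,w,t) = |z-w| + μ(z, t+T(w,z))`. -/
noncomputable def dNI (d : ℕ) (a : ℕ → ℕ → ℂ) (z w : ℂ) (t : ℝ) : ℝ :=
  Norm.norm (z - w) + muF d a z (t + Twist d a w z)

/-! ### Auxiliary machinery -/

noncomputable def Lmap (α β : ℂ) : ℂ →L[ℝ] ℂ :=
  α • ContinuousLinearMap.id ℝ ℂ + β • Complex.conjCLE.toContinuousLinearMap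

lemma Lmap_apply (α β v : ℂ) : Lmap α β v = α * v + β * (starRingEnd ℂ v) := by
  simp [Lmap, smul_eq_mul]

lemma Lmap_add (α β γ δ : ℂ) : Lmap α β + Lmap γ δ = Lmap (α + γ) (β + δ) := by
  ext v; simp [Lmap_apply]; ring

lemma Lmap_sub (α β γ δ : ℂ) : Lmap α β - Lmap γ δ = Lmap (α - γ) (β - δ) := by
  ext v; simp [Lmap_apply]; ring

lemma Lmap_smul (c α β : ℂ) : c • Lmap α β = Lmap (c * α) (c * β) := by
  ext v; simp [Lmap_apply]; ring

lemma Lmap_sum {ι : Type*} (s : Finset ι) (α β : ι → ℂ) :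
    ∑ i ∈ s, Lmap (α i) (β i) = Lmap (∑ i ∈ s, α i) (∑ i ∈ s, β i) := by
  classical
  induction s using Finset.induction_on with
  | empty => ext v; simp [Lmap_apply]
  | insert _ _ h ih => simp [Finset.sum_insert h, ih, Lmap_add]

lemma wDz_eq {f : ℂ → ℂ} {α β z : ℂ} (h : HasFDerivAt f (Lmap α β) z) :
    wDz f z = α := by
  rw [wDz, h.fderiv]
  simp [Lmap_apply, Complex.conj_I]
  ring_nf
  simp [Complex.I_sq]
  ring

lemma wDzbar_eq {f : ℂ → ℂ} {α β z : ℂ} (h : HasFDerivAt f (Lmap α β) z) :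
    wDzbar f z = β := by
  rw [wDzbar, h.fderiv]
  simp [Lmap_apply, Complex.conj_I]
  ring_nf
  simp [Complex.I_sq]
  ring

lemma hasFDerivAt_pow'' (m : ℕ) (z : ℂ) :
    HasFDerivAt (fun ζ : ℂ => ζ ^ m) (Lmap ((m : ℂ) * z ^ (m - 1)) 0) z := by
  have h := (hasDerivAt_pow m z).hasFDerivAt.restrictScalars ℝ
  refine h.congr_fderiv ?_
  ext v
  simp [Lmap_apply, smul_eq_mul]
  ring

lemma hasFDerivAt_conj_pow (n : ℕ) (z : ℂ) :
    HasFDerivAt (fun ζ : ℂ => (starRingEnd ℂ ζ) ^ n)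
      (Lmap 0 ((n : ℂ) * (starRingEnd ℂ z) ^ (n - 1))) z := by
  have hc : HasFDerivAt (fun ζ : ℂ => starRingEnd ℂ ζ)
      (Complex.conjCLE.toContinuousLinearMap) z :=
    Complex.conjCLE.toContinuousLinearMap.hasFDerivAt
  have hp := ((hasDerivAt_pow n (starRingEnd ℂ z)).hasFDerivAt.restrictScalars ℝ)
  have := hp.comp z hc
  refine this.congr_fderiv ?_
  ext v
  simp [Lmap_apply, smul_eq_mul]
  ring

lemma hasFDerivAt_mon (c : ℂ) (m n : ℕ) (z : ℂ) :
    HasFDerivAt (fun ζ : ℂ => c * ζ ^ m * (starRingEnd ℂ ζ) ^ n)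
      (Lmap (c * m * z ^ (m - 1) * (starRingEnd ℂ z) ^ n)
            (c * n * z ^ m * (starRingEnd ℂ z) ^ (n - 1))) z := by
  have h := ((hasFDerivAt_pow'' m z).const_mul c).mul (hasFDerivAt_conj_pow n z)
  refine h.congr_fderiv ?_
  ext v
  simp [Lmap_apply, smul_eq_mul]
  ring

lemma choose_step (m j : ℕ) :
    ((m.choose j : ℂ)) * ((m - j : ℕ) : ℂ) = ((j : ℂ) + 1) * (m.choose (j + 1) : ℂ) := by
  have h2 : ((m.choose (j+1) * (j+1) : ℕ) : ℂ) = ((m.choose j * (m - j) : ℕ) : ℂ) := by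
    rw [Nat.choose_succ_right_eq m j]
  push_cast at h2
  linear_combination -h2

lemma hasFDerivAt_Acoef (d : ℕ) (a : ℕ → ℕ → ℂ) (j k : ℕ) (z : ℂ) :
    HasFDerivAt (fun ζ => Acoef d a j k ζ)
      (Lmap (((j : ℂ) + 1) * Acoef d a (j + 1) k z)
            (((k : ℂ) + 1) * Acoef d a j (k + 1) z)) z := by
  have h : HasFDerivAt (fun ζ => Acoef d a j k ζ)
      (∑ m ∈ Finset.range (d + 1), ∑ n ∈ Finset.range (d + 1),
        Lmap ((m.choose j : ℂ) * (n.choose k : ℂ) * a m n * ((m - j : ℕ) : ℂ)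
                * z ^ (m - j - 1) * (starRingEnd ℂ z) ^ (n - k))
             ((m.choose j : ℂ) * (n.choose k : ℂ) * a m n * ((n - k : ℕ) : ℂ)
                * z ^ (m - j) * (starRingEnd ℂ z) ^ (n - k - 1))) z := by
    unfold Acoef
    apply HasFDerivAt.fun_sum
    intro m _
    apply HasFDerivAt.fun_sum
    intro n _
    have := hasFDerivAt_mon ((m.choose j : ℂ) * (n.choose k : ℂ) * a m n) (m - j) (n - k) z
    convert this using 2 <;> ring
  simp only [Lmap_sum] at h
  have e1 : (∑ m ∈ Finset.range (d + 1), ∑ n ∈ Finset.range (d + 1),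
      (m.choose j : ℂ) * (n.choose k : ℂ) * a m n * ((m - j : ℕ) : ℂ)
        * z ^ (m - j - 1) * (starRingEnd ℂ z) ^ (n - k))
      = ((j : ℂ) + 1) * Acoef d a (j + 1) k z := by
    unfold Acoef
    rw [Finset.mul_sum]
    refine Finset.sum_congr rfl fun m _ => ?_
    rw [Finset.mul_sum]
    refine Finset.sum_congr rfl fun n _ => ?_
    rw [Nat.sub_sub]
    have := choose_step m j
    linear_combination ((n.choose k : ℂ) * a m n * z ^ (m - (j+1)) * (starRingEnd ℂ z) ^ (n - k)) * this
  have e2 : (∑ m ∈ Finset.range (d + 1), ∑ n ∈ Finset.range (d + 1),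
      (m.choose j : ℂ) * (n.choose k : ℂ) * a m n * ((n - k : ℕ) : ℂ)
        * z ^ (m - j) * (starRingEnd ℂ z) ^ (n - k - 1))
      = ((k : ℂ) + 1) * Acoef d a j (k + 1) z := by
    unfold Acoef
    rw [Finset.mul_sum]
    refine Finset.sum_congr rfl fun m _ => ?_
    rw [Finset.mul_sum]
    refine Finset.sum_congr rfl fun n _ => ?_
    rw [Nat.sub_sub]
    have := choose_step n k
    linear_combination ((m.choose j : ℂ) * a m n * z ^ (m - j) * (starRingEnd ℂ z) ^ (n - (k+1))) * this
  rw [e1, e2] at h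
  exact h

lemma conj_Acoef (d : ℕ) (a : ℕ → ℕ → ℂ) (hsym : ∀ m n, (starRingEnd ℂ) (a m n) = a n m)
    (j k : ℕ) (z : ℂ) :
    starRingEnd ℂ (Acoef d a j k z) = Acoef d a k j z := by
  unfold Acoef
  rw [map_sum]
  rw [Finset.sum_comm]
  refine Finset.sum_congr rfl fun m _ => ?_
  rw [map_sum]
  refine Finset.sum_congr rfl fun n _ => ?_
  simp only [map_mul, map_pow, Complex.conj_conj, map_natCast, hsym]
  ring

lemma twist_eq (d : ℕ) (a : ℕ → ℕ → ℂ) (hsym : ∀ m n, (starRingEnd ℂ) (a m n) = a n m)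
    (w ζ : ℂ) (t : ℝ) :
    ((t + Twist d a w ζ : ℝ) : ℂ) =
      (t : ℂ) + Complex.I * (∑ j ∈ Finset.Icc 1 d, Acoef d a j 0 ζ * (w - ζ) ^ j)
        - Complex.I * (∑ j ∈ Finset.Icc 1 d, Acoef d a 0 j ζ * (starRingEnd ℂ (w - ζ)) ^ j) := by
  set u := ∑ j ∈ Finset.Icc 1 d, Acoef d a j 0 ζ * (w - ζ) ^ j with hu
  have hcu : starRingEnd ℂ u = ∑ j ∈ Finset.Icc 1 d, Acoef d a 0 j ζ * (starRingEnd ℂ (w - ζ)) ^ j := by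
    rw [hu, map_sum]
    refine Finset.sum_congr rfl fun j _ => ?_
    rw [map_mul, map_pow, conj_Acoef d a hsym]
  rw [← hcu]
  have : (u - starRingEnd ℂ u) = (2 * u.im : ℝ) * Complex.I := Complex.sub_conj u
  have h2 : Complex.I * u - Complex.I * starRingEnd ℂ u = ((-2 * u.im : ℝ) : ℂ) := by
    rw [← mul_sub, this]
    push_cast
    ring_nf
    rw [Complex.I_sq]
    ring
  rw [Twist, ← hu]
  push_cast at h2 ⊢
  rw [← h2]
  ring

lemma binom (d n : ℕ) (hn : n ≤ d) (u v : ℂ) :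
    (u + v) ^ n = ∑ k ∈ Finset.range (d + 1), (n.choose k : ℂ) * u ^ (n - k) * v ^ k := by
  rw [add_comm u v, add_pow]
  rw [Finset.sum_subset (Finset.range_subset_range.2 (by omega : n + 1 ≤ d + 1))]
  · exact Finset.sum_congr rfl fun k _ => by ring
  · intro k _ hk
    simp only [Finset.mem_range, not_lt] at hk
    have : n.choose k = 0 := Nat.choose_eq_zero_of_lt (by omega)
    simp [this]

lemma dbinom (d n : ℕ) (hn : n ≤ d) (u v : ℂ) :
    (n : ℂ) * (u + v) ^ (n - 1) =
      ∑ j ∈ Finset.range (d + 1), (j : ℂ) * (n.choose j : ℂ) * u ^ (n - j) * v ^ (j - 1) := by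
  cases n with
  | zero =>
    simp only [Nat.cast_zero, zero_mul]
    symm
    apply Finset.sum_eq_zero
    intro j _
    cases j with
    | zero => simp
    | succ i => simp [Nat.choose_eq_zero_of_lt (Nat.succ_pos i)]
  | succ n' =>
    have hd : 1 ≤ d := by omega
    rw [Finset.sum_range_succ']
    simp only [Nat.cast_zero, zero_mul, add_zero]
    have hterm : ∀ i, ((i + 1 : ℕ) : ℂ) * ((n' + 1).choose (i + 1) : ℂ) * u ^ (n' + 1 - (i + 1)) * v ^ (i + 1 - 1)
        = ((n' + 1 : ℕ) : ℂ) * ((n'.choose i : ℂ) * u ^ (n' - i) * v ^ i) := by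
      intro i
      have h1 : (n' + 1) * n'.choose i = (n' + 1).choose (i + 1) * (i + 1) := by
        rw [← Nat.add_one_mul_choose_eq]
      have h1c : ((n' + 1 : ℕ) : ℂ) * (n'.choose i : ℂ) = ((n' + 1).choose (i + 1) : ℂ) * ((i + 1 : ℕ) : ℂ) := by
        exact_mod_cast congrArg (Nat.cast : ℕ → ℂ) h1
      have he : n' + 1 - (i + 1) = n' - i := by omega
      rw [he]
      simp only [Nat.add_sub_cancel]
      linear_combination (-(u ^ (n' - i) * v ^ i)) * h1c
    rw [Finset.sum_congr rfl fun i _ => hterm i, ← Finset.mul_sum]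
    have hb := binom (d - 1) n' (by omega) u v
    have hdd : d - 1 + 1 = d := by omega
    rw [hdd] at hb
    rw [← hb]
    push_cast
    simp

lemma sum4_comm {M : Type*} [AddCommMonoid M] (s₁ s₂ s₃ s₄ : Finset ℕ) (f : ℕ → ℕ → ℕ → ℕ → M) :
    (∑ j ∈ s₁, ∑ k ∈ s₂, ∑ m ∈ s₃, ∑ n ∈ s₄, f j k m n)
      = ∑ m ∈ s₃, ∑ n ∈ s₄, ∑ j ∈ s₁, ∑ k ∈ s₂, f j k m n := by
  calc (∑ j ∈ s₁, ∑ k ∈ s₂, ∑ m ∈ s₃, ∑ n ∈ s₄, f j k m n)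
      = ∑ j ∈ s₁, ∑ m ∈ s₃, ∑ k ∈ s₂, ∑ n ∈ s₄, f j k m n :=
        Finset.sum_congr rfl fun j _ => Finset.sum_comm
    _ = ∑ m ∈ s₃, ∑ j ∈ s₁, ∑ k ∈ s₂, ∑ n ∈ s₄, f j k m n := Finset.sum_comm
    _ = ∑ m ∈ s₃, ∑ j ∈ s₁, ∑ n ∈ s₄, ∑ k ∈ s₂, f j k m n :=
        Finset.sum_congr rfl fun m _ => Finset.sum_congr rfl fun j _ => Finset.sum_comm
    _ = ∑ m ∈ s₃, ∑ n ∈ s₄, ∑ j ∈ s₁, ∑ k ∈ s₂, f j k m n :=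
        Finset.sum_congr rfl fun m _ => Finset.sum_comm

lemma Acoef10_shift (d : ℕ) (a : ℕ → ℕ → ℂ) (z X : ℂ) :
    Acoef d a 1 0 (z + X) =
      ∑ j ∈ Finset.range (d + 1), ∑ k ∈ Finset.range (d + 1),
        (j : ℂ) * Acoef d a j k z * X ^ (j - 1) * (starRingEnd ℂ X) ^ k := by
  have expand : ∀ j k : ℕ, (j : ℂ) * Acoef d a j k z * X ^ (j - 1) * (starRingEnd ℂ X) ^ k
      = ∑ m ∈ Finset.range (d + 1), ∑ n ∈ Finset.range (d + 1),
          a m n * ((j : ℂ) * (m.choose j : ℂ) * z ^ (m - j) * X ^ (j - 1))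
            * ((n.choose k : ℂ) * (starRingEnd ℂ z) ^ (n - k) * (starRingEnd ℂ X) ^ k) := by
    intro j k
    rw [Acoef]
    simp only [Finset.mul_sum, Finset.sum_mul]
    exact Finset.sum_congr rfl fun m _ => Finset.sum_congr rfl fun n _ => by ring
  rw [Finset.sum_congr rfl fun j _ => Finset.sum_congr rfl fun k _ => expand j k]
  rw [sum4_comm]
  rw [Acoef]
  refine Finset.sum_congr rfl fun m hm => ?_
  refine Finset.sum_congr rfl fun n hn => ?_
  rw [Finset.mem_range] at hm hn
  have hm' : m ≤ d := by omega
  have hn' : n ≤ d := by omega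
  have h1 : ∀ j ∈ Finset.range (d+1), ∑ k ∈ Finset.range (d + 1),
      a m n * ((j : ℂ) * (m.choose j : ℂ) * z ^ (m - j) * X ^ (j - 1))
        * ((n.choose k : ℂ) * (starRingEnd ℂ z) ^ (n - k) * (starRingEnd ℂ X) ^ k)
      = a m n * ((j : ℂ) * (m.choose j : ℂ) * z ^ (m - j) * X ^ (j - 1))
        * (starRingEnd ℂ z + starRingEnd ℂ X) ^ n := by
    intro j _
    rw [binom d n hn' (starRingEnd ℂ z) (starRingEnd ℂ X), Finset.mul_sum]
  rw [Finset.sum_congr rfl h1, ← Finset.sum_mul, ← Finset.mul_sum]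
  rw [show (∑ j ∈ Finset.range (d+1), ((j : ℂ) * (m.choose j : ℂ) * z ^ (m - j) * X ^ (j - 1)))
      = (m : ℂ) * (z + X) ^ (m - 1) from (dbinom d m hm' z X).symm]
  rw [map_add]
  simp only [Nat.choose_one_right, Nat.choose_zero_right, Nat.cast_one, Nat.sub_zero]
  ring

lemma Acoef01_shift (d : ℕ) (a : ℕ → ℕ → ℂ) (z X : ℂ) :
    Acoef d a 0 1 (z + X) =
      ∑ j ∈ Finset.range (d + 1), ∑ k ∈ Finset.range (d + 1),
        (k : ℂ) * Acoef d a j k z * X ^ j * (starRingEnd ℂ X) ^ (k - 1) := by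
  have expand : ∀ j k : ℕ, (k : ℂ) * Acoef d a j k z * X ^ j * (starRingEnd ℂ X) ^ (k - 1)
      = ∑ m ∈ Finset.range (d + 1), ∑ n ∈ Finset.range (d + 1),
          a m n * ((m.choose j : ℂ) * z ^ (m - j) * X ^ j)
            * ((k : ℂ) * (n.choose k : ℂ) * (starRingEnd ℂ z) ^ (n - k) * (starRingEnd ℂ X) ^ (k - 1)) := by
    intro j k
    rw [Acoef]
    simp only [Finset.mul_sum, Finset.sum_mul]
    exact Finset.sum_congr rfl fun m _ => Finset.sum_congr rfl fun n _ => by ring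
  rw [Finset.sum_congr rfl fun j _ => Finset.sum_congr rfl fun k _ => expand j k]
  rw [sum4_comm]
  rw [Acoef]
  refine Finset.sum_congr rfl fun m hm => ?_
  refine Finset.sum_congr rfl fun n hn => ?_
  rw [Finset.mem_range] at hm hn
  have hm' : m ≤ d := by omega
  have hn' : n ≤ d := by omega
  have h1 : ∀ j ∈ Finset.range (d+1), ∑ k ∈ Finset.range (d + 1),
      a m n * ((m.choose j : ℂ) * z ^ (m - j) * X ^ j)
        * ((k : ℂ) * (n.choose k : ℂ) * (starRingEnd ℂ z) ^ (n - k) * (starRingEnd ℂ X) ^ (k - 1))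
      = a m n * ((m.choose j : ℂ) * z ^ (m - j) * X ^ j)
        * ((n : ℂ) * (starRingEnd ℂ z + starRingEnd ℂ X) ^ (n - 1)) := by
    intro j _
    rw [dbinom d n hn' (starRingEnd ℂ z) (starRingEnd ℂ X), Finset.mul_sum]
  rw [Finset.sum_congr rfl h1, ← Finset.sum_mul, ← Finset.mul_sum]
  rw [show (∑ j ∈ Finset.range (d+1), ((m.choose j : ℂ) * z ^ (m - j) * X ^ j))
      = (z + X) ^ m from (binom d m hm' z X).symm]
  rw [map_add]
  simp only [Nat.choose_one_right, Nat.choose_zero_right, Nat.cast_one, Nat.sub_zero]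
  ring

lemma telescope_sum (d : ℕ) (A : ℕ → ℂ) (X : ℂ) :
    ∑ j ∈ Finset.Icc 1 d, (((j : ℂ) + 1) * A (j + 1) * X ^ j - (j : ℂ) * A j * X ^ (j - 1))
      = ((d : ℕ) + 1 : ℕ) * A (d + 1) * X ^ d - A 1 := by
  have key := Finset.sum_range_sub (f := fun i => (((i + 1 : ℕ)) : ℂ) * A (i + 1) * X ^ i) d
  calc (∑ j ∈ Finset.Icc 1 d, (((j : ℂ) + 1) * A (j + 1) * X ^ j - (j : ℂ) * A j * X ^ (j - 1)))
      = ∑ i ∈ Finset.range d,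
          ((((i + 1 + 1 : ℕ)) : ℂ) * A (i + 1 + 1) * X ^ (i + 1) - (((i + 1 : ℕ)) : ℂ) * A (i + 1) * X ^ i) := by
        rw [← Finset.Ico_add_one_right_eq_Icc, Finset.sum_Ico_eq_sum_range]
        rw [show d + 1 - 1 = d from rfl]
        refine Finset.sum_congr rfl fun i _ => ?_
        have e1 : 1 + i - 1 = i := by omega
        have e2 : 1 + i + 1 = i + 1 + 1 := by omega
        have e3 : 1 + i = i + 1 := by omega
        rw [e1, e3]
        push_cast
        ring
    _ = (((d + 1 : ℕ)) : ℂ) * A (d + 1) * X ^ d - (((0 + 1 : ℕ)) : ℂ) * A (0 + 1) * X ^ 0 := key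
    _ = ((d : ℕ) + 1 : ℕ) * A (d + 1) * X ^ d - A 1 := by push_cast; ring

lemma Acoef_top_left (d : ℕ) (a : ℕ → ℕ → ℂ) (k : ℕ) (z : ℂ) :
    Acoef d a (d + 1) k z = 0 := by
  unfold Acoef
  apply Finset.sum_eq_zero
  intro m hm
  apply Finset.sum_eq_zero
  intro n _
  rw [Finset.mem_range] at hm
  rw [Nat.choose_eq_zero_of_lt (by omega)]
  simp

lemma Acoef_top_right (d : ℕ) (a : ℕ → ℕ → ℂ) (j : ℕ) (z : ℂ) :
    Acoef d a j (d + 1) z = 0 := by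
  unfold Acoef
  apply Finset.sum_eq_zero
  intro m _
  apply Finset.sum_eq_zero
  intro n hn
  rw [Finset.mem_range] at hn
  rw [Nat.choose_eq_zero_of_lt (show n < d + 1 by omega)]
  simp

lemma hasFDerivAt_wpow (j : ℕ) (w z : ℂ) :
    HasFDerivAt (fun ζ : ℂ => (w - ζ) ^ j) (Lmap (-(j : ℂ) * (w - z) ^ (j - 1)) 0) z := by
  have h1 : HasDerivAt (fun ζ : ℂ => w - ζ) (-1) z := by
    simpa using (hasDerivAt_id z).const_sub w
  have h2 : HasDerivAt (fun ζ : ℂ => (w - ζ) ^ j) ((j : ℂ) * (w - z) ^ (j - 1) * (-1)) z :=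
    HasDerivAt.comp z (hasDerivAt_pow j (w - z)) h1
  have h3 := h2.hasFDerivAt.restrictScalars ℝ
  refine h3.congr_fderiv ?_
  ext v
  simp [Lmap_apply, smul_eq_mul]
  ring

lemma hasFDerivAt_wconjpow (j : ℕ) (w z : ℂ) :
    HasFDerivAt (fun ζ : ℂ => (starRingEnd ℂ (w - ζ)) ^ j)
      (Lmap 0 (-(j : ℂ) * (starRingEnd ℂ (w - z)) ^ (j - 1))) z := by
  have hfun : (fun ζ : ℂ => (starRingEnd ℂ (w - ζ)) ^ j)
      = ((fun x : ℂ => x ^ j) ∘ (fun ζ : ℂ => starRingEnd ℂ w - starRingEnd ℂ ζ)) := by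
    funext ζ
    simp [Function.comp, map_sub]
  have hc : HasFDerivAt (fun ζ : ℂ => starRingEnd ℂ ζ)
      (Complex.conjCLE.toContinuousLinearMap) z :=
    Complex.conjCLE.toContinuousLinearMap.hasFDerivAt
  have h0 := hc.const_sub (starRingEnd ℂ w)
  have hp := (hasDerivAt_pow j (starRingEnd ℂ (w - z))).hasFDerivAt.restrictScalars ℝ
  rw [map_sub] at hp
  have hcomp := hp.comp z h0
  rw [hfun]
  refine hcomp.congr_fderiv ?_
  ext v
  simp [Lmap_apply, smul_eq_mul, map_sub]
  ring

lemma hasFDerivAt_g (d : ℕ) (a : ℕ → ℕ → ℂ) (w z : ℂ) :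
    HasFDerivAt (fun ζ => ∑ j ∈ Finset.Icc 1 d, Acoef d a j 0 ζ * (w - ζ) ^ j)
      (Lmap (-Acoef d a 1 0 z) (∑ j ∈ Finset.Icc 1 d, Acoef d a j 1 z * (w - z) ^ j)) z := by
  have hterm : ∀ j ∈ Finset.Icc 1 d,
      HasFDerivAt (fun ζ => Acoef d a j 0 ζ * (w - ζ) ^ j)
        (Lmap (((j : ℂ) + 1) * Acoef d a (j + 1) 0 z * (w - z) ^ j
                 - (j : ℂ) * Acoef d a j 0 z * (w - z) ^ (j - 1))
              (Acoef d a j 1 z * (w - z) ^ j)) z := by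
    intro j _
    have h := (hasFDerivAt_Acoef d a j 0 z).mul (hasFDerivAt_wpow j w z)
    rw [Lmap_smul, Lmap_smul, Lmap_add] at h
    refine h.congr_fderiv ?_
    congr 1 <;> ring
  have hsum := HasFDerivAt.fun_sum hterm
  rw [Lmap_sum] at hsum
  have eα : (∑ j ∈ Finset.Icc 1 d, (((j : ℂ) + 1) * Acoef d a (j + 1) 0 z * (w - z) ^ j
      - (j : ℂ) * Acoef d a j 0 z * (w - z) ^ (j - 1))) = -Acoef d a 1 0 z := by
    rw [telescope_sum d (fun j => Acoef d a j 0 z) (w - z), Acoef_top_left]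
    push_cast
    ring
  rw [eα] at hsum
  exact hsum

lemma hasFDerivAt_ghat (d : ℕ) (a : ℕ → ℕ → ℂ) (w z : ℂ) :
    HasFDerivAt (fun ζ => ∑ j ∈ Finset.Icc 1 d, Acoef d a 0 j ζ * (starRingEnd ℂ (w - ζ)) ^ j)
      (Lmap (∑ j ∈ Finset.Icc 1 d, Acoef d a 1 j z * (starRingEnd ℂ (w - z)) ^ j)
            (-Acoef d a 0 1 z)) z := by
  have hterm : ∀ j ∈ Finset.Icc 1 d,
      HasFDerivAt (fun ζ => Acoef d a 0 j ζ * (starRingEnd ℂ (w - ζ)) ^ j)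
        (Lmap (Acoef d a 1 j z * (starRingEnd ℂ (w - z)) ^ j)
              (((j : ℂ) + 1) * Acoef d a 0 (j + 1) z * (starRingEnd ℂ (w - z)) ^ j
                 - (j : ℂ) * Acoef d a 0 j z * (starRingEnd ℂ (w - z)) ^ (j - 1))) z := by
    intro j _
    have h := (hasFDerivAt_Acoef d a 0 j z).mul (hasFDerivAt_wconjpow j w z)
    rw [Lmap_smul, Lmap_smul, Lmap_add] at h
    refine h.congr_fderiv ?_
    congr 1 <;> ring
  have hsum := HasFDerivAt.fun_sum hterm
  rw [Lmap_sum] at hsum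
  have eβ : (∑ j ∈ Finset.Icc 1 d, (((j : ℂ) + 1) * Acoef d a 0 (j + 1) z * (starRingEnd ℂ (w - z)) ^ j
      - (j : ℂ) * Acoef d a 0 j z * (starRingEnd ℂ (w - z)) ^ (j - 1))) = -Acoef d a 0 1 z := by
    rw [telescope_sum d (fun j => Acoef d a 0 j z) (starRingEnd ℂ (w - z)), Acoef_top_right]
    push_cast
    ring
  rw [eβ] at hsum
  exact hsum

lemma hasFDerivAt_gw (d : ℕ) (a : ℕ → ℕ → ℂ) (z w : ℂ) :
    HasFDerivAt (fun ω => ∑ j ∈ Finset.Icc 1 d, Acoef d a j 0 z * (ω - z) ^ j)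
      (Lmap (∑ j ∈ Finset.Icc 1 d, (j : ℂ) * Acoef d a j 0 z * (w - z) ^ (j - 1)) 0) w := by
  have hterm : ∀ j ∈ Finset.Icc 1 d,
      HasFDerivAt (fun ω : ℂ => Acoef d a j 0 z * (ω - z) ^ j)
        (Lmap ((j : ℂ) * Acoef d a j 0 z * (w - z) ^ (j - 1)) 0) w := by
    intro j _
    have h1 : HasDerivAt (fun ω : ℂ => (ω - z) ^ j) ((j : ℂ) * (w - z) ^ (j - 1) * 1) w :=
      HasDerivAt.comp w (hasDerivAt_pow j (w - z)) ((hasDerivAt_id w).sub_const z)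
    have h2 := (h1.hasFDerivAt.restrictScalars ℝ).const_mul (Acoef d a j 0 z)
    refine h2.congr_fderiv ?_
    ext v
    simp [Lmap_apply, smul_eq_mul]
    ring
  have hsum := HasFDerivAt.fun_sum hterm
  rw [Lmap_sum] at hsum
  simpa using hsum

lemma hasFDerivAt_ghatw (d : ℕ) (a : ℕ → ℕ → ℂ) (z w : ℂ) :
    HasFDerivAt (fun ω => ∑ j ∈ Finset.Icc 1 d, Acoef d a 0 j z * (starRingEnd ℂ (ω - z)) ^ j)
      (Lmap 0 (∑ j ∈ Finset.Icc 1 d, (j : ℂ) * Acoef d a 0 j z * (starRingEnd ℂ (w - z)) ^ (j - 1))) w := by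
  have hterm : ∀ j ∈ Finset.Icc 1 d,
      HasFDerivAt (fun ω : ℂ => Acoef d a 0 j z * (starRingEnd ℂ (ω - z)) ^ j)
        (Lmap 0 ((j : ℂ) * Acoef d a 0 j z * (starRingEnd ℂ (w - z)) ^ (j - 1))) w := by
    intro j _
    have hfun : (fun ω : ℂ => (starRingEnd ℂ (ω - z)) ^ j)
        = ((fun x : ℂ => x ^ j) ∘ (fun ω : ℂ => starRingEnd ℂ ω - starRingEnd ℂ z)) := by
      funext ω
      simp [Function.comp, map_sub]
    have hc : HasFDerivAt (fun ω : ℂ => starRingEnd ℂ ω)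
        (Complex.conjCLE.toContinuousLinearMap) w :=
      Complex.conjCLE.toContinuousLinearMap.hasFDerivAt
    have h0 := hc.sub_const (starRingEnd ℂ z)
    have hp := (hasDerivAt_pow j (starRingEnd ℂ (w - z))).hasFDerivAt.restrictScalars ℝ
    rw [map_sub] at hp
    have hcomp := (hp.comp w h0).const_mul (Acoef d a 0 j z)
    have : (fun ω : ℂ => Acoef d a 0 j z * (starRingEnd ℂ (ω - z)) ^ j)
        = fun ω : ℂ => Acoef d a 0 j z * ((fun x : ℂ => x ^ j) ∘ (fun ω : ℂ => starRingEnd ℂ ω - starRingEnd ℂ z)) ω := by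
      funext ω
      simp [Function.comp, map_sub]
    rw [this]
    refine hcomp.congr_fderiv ?_
    ext v
    simp [Lmap_apply, smul_eq_mul, map_sub]
    ring
  have hsum := HasFDerivAt.fun_sum hterm
  rw [Lmap_sum] at hsum
  simpa using hsum

lemma range_to_Icc (d : ℕ) (G : ℕ → ℂ) :
    ∑ j ∈ Finset.range (d + 1), G j = G 0 + ∑ j ∈ Finset.Icc 1 d, G j := by
  have h : Finset.range (d + 1) = insert 0 (Finset.Icc 1 d) := by
    ext x
    simp only [Finset.mem_range, Finset.mem_insert, Finset.mem_Icc]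
    omega
  rw [h, Finset.sum_insert (by simp)]

lemma double_split (d : ℕ) (T : ℕ → ℕ → ℂ) (h0 : ∀ k, T 0 k = 0) :
    (∑ j ∈ Finset.range (d + 1), ∑ k ∈ Finset.range (d + 1), T j k)
      = ∑ j ∈ Finset.Icc 1 d, T j 0 + ∑ j ∈ Finset.Icc 1 d, ∑ k ∈ Finset.Icc 1 d, T j k := by
  rw [range_to_Icc d (fun j => ∑ k ∈ Finset.range (d + 1), T j k)]
  rw [Finset.sum_eq_zero (fun k _ => h0 k), zero_add]
  rw [Finset.sum_congr rfl (fun j _ => range_to_Icc d (fun k => T j k))]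
  rw [Finset.sum_add_distrib]

lemma double_split' (d : ℕ) (T : ℕ → ℕ → ℂ) (h0 : ∀ j, T j 0 = 0) :
    (∑ j ∈ Finset.range (d + 1), ∑ k ∈ Finset.range (d + 1), T j k)
      = ∑ k ∈ Finset.Icc 1 d, T 0 k + ∑ j ∈ Finset.Icc 1 d, ∑ k ∈ Finset.Icc 1 d, T j k := by
  rw [Finset.sum_congr rfl (fun j _ => range_to_Icc d (fun k => T j k))]
  rw [Finset.sum_add_distrib]
  rw [Finset.sum_eq_zero (fun j (_ : j ∈ Finset.range (d + 1)) => h0 j), zero_add]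
  rw [range_to_Icc d (fun j => ∑ k ∈ Finset.Icc 1 d, T j k)]

lemma row_le_Lam (d : ℕ) (a : ℕ → ℕ → ℂ) (z : ℂ) (δ : ℝ) (hδ : 0 ≤ δ) :
    ∑ j ∈ Finset.Icc 1 d, Norm.norm (Acoef d a 1 j z) * δ ^ (1 + j) ≤ Lam d a z δ := by
  rcases Nat.eq_zero_or_pos d with hd | hd
  · subst hd
    simp [Lam]
  · unfold Lam
    have h1 : (1 : ℕ) ∈ Finset.Icc 1 d := Finset.mem_Icc.2 ⟨le_refl 1, hd⟩
    exact Finset.single_le_sum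
      (f := fun j => ∑ k ∈ Finset.Icc 1 d, Norm.norm (Acoef d a j k z) * δ ^ (j + k))
      (fun j _ => Finset.sum_nonneg fun k _ => by positivity) h1

lemma col_le_Lam (d : ℕ) (a : ℕ → ℕ → ℂ) (z : ℂ) (δ : ℝ) (hδ : 0 ≤ δ) :
    ∑ j ∈ Finset.Icc 1 d, Norm.norm (Acoef d a j 1 z) * δ ^ (j + 1) ≤ Lam d a z δ := by
  unfold Lam
  refine Finset.sum_le_sum fun j hj => ?_
  have hd : 1 ≤ d := le_trans (Finset.mem_Icc.1 hj).1 (Finset.mem_Icc.1 hj).2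
  exact Finset.single_le_sum
    (f := fun k => Norm.norm (Acoef d a j k z) * δ ^ (j + k))
    (fun k _ => by positivity) (Finset.mem_Icc.2 ⟨le_refl 1, hd⟩)

lemma deriv_ofReal_add (c t : ℝ) :
    deriv (fun s : ℝ => ((s + c : ℝ) : ℂ)) t = 1 := by
  have hfun : (fun s : ℝ => ((s + c : ℝ) : ℂ)) = fun s : ℝ => (s : ℂ) + (c : ℂ) := by
    funext s
    push_cast
    ring
  rw [hfun]
  have h1 : HasDerivAt (fun s : ℝ => (s : ℂ)) 1 t := by
    simpa using (hasDerivAt_id t).ofReal_comp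
  exact (h1.add_const (c : ℂ)).deriv

/-- For a subharmonic, nonharmonic polynomial `p` of degree `d`, each of the four
vector fields `L_z, L̄_z, 𝓛_w, 𝓛̄_w` applied to `t + T(w,z)` is bounded by
`C Λ(z, d_{NI}(z,w,t)) / d_{NI}(z,w,t)` with `C` depending only on `d`. -/
theorem vector_fields_t_add_twist_bound (d : ℕ) :
    ∃ C : ℝ, 0 < C ∧
      ∀ a : ℕ → ℕ → ℂ,
        (∀ m n, d < m + n → a m n = 0) →
        (∀ m n, (starRingEnd ℂ) (a m n) = a n m) →
        (∀ z : ℂ, 0 ≤ (Acoef d a 1 1 z).re) →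
        (∃ z₀ : ℂ, Acoef d a 1 1 z₀ ≠ 0) →
        ∀ (z w : ℂ) (t : ℝ), z ≠ w →
          Norm.norm (wDz (fun ζ => ((t + Twist d a w ζ : ℝ) : ℂ)) z
              + Complex.I * Acoef d a 1 0 z
                * deriv (fun s : ℝ => ((s + Twist d a w z : ℝ) : ℂ)) t)
            ≤ C * Lam d a z (dNI d a z w t) / dNI d a z w t ∧
          Norm.norm (wDzbar (fun ζ => ((t + Twist d a w ζ : ℝ) : ℂ)) z
              - Complex.I * Acoef d a 0 1 z
                * deriv (fun s : ℝ => ((s + Twist d a w z : ℝ) : ℂ)) t)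
            ≤ C * Lam d a z (dNI d a z w t) / dNI d a z w t ∧
          Norm.norm (wDz (fun ω => ((t + Twist d a ω z : ℝ) : ℂ)) w
              - Complex.I * Acoef d a 1 0 w
                * deriv (fun s : ℝ => ((s + Twist d a w z : ℝ) : ℂ)) t)
            ≤ C * Lam d a z (dNI d a z w t) / dNI d a z w t ∧
          Norm.norm (wDzbar (fun ω => ((t + Twist d a ω z : ℝ) : ℂ)) w
              + Complex.I * Acoef d a 0 1 w
                * deriv (fun s : ℝ => ((s + Twist d a w z : ℝ) : ℂ)) t)
            ≤ C * Lam d a z (dNI d a z w t) / dNI d a z w t := by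
  refine ⟨(d : ℝ) + 1, by positivity, ?_⟩
  intro a _ha hsym _hpos _hnz z w t hzw
  have hμ : 0 ≤ muF d a z (t + Twist d a w z) := by
    apply Real.sInf_nonneg
    rintro x ⟨j, k, -, -, -, rfl⟩
    positivity
  have habs : 0 < Norm.norm (z - w) := by
    rw [norm_pos_iff]
    exact sub_ne_zero.mpr hzw
  have hδpos : 0 < dNI d a z w t := by
    rw [dNI]; linarith
  set δ := dNI d a z w t with hδdef
  set u := Norm.norm (w - z) with hu
  have hu0 : 0 ≤ u := norm_nonneg _
  have hXδ : u ≤ δ := by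
    rw [hδdef, dNI, hu, norm_sub_rev w z]
    linarith
  have hΛ : 0 ≤ Lam d a z δ :=
    Finset.sum_nonneg fun j _ => Finset.sum_nonneg fun k _ => by positivity
  have hderiv_t : deriv (fun s : ℝ => ((s + Twist d a w z : ℝ) : ℂ)) t = 1 :=
    deriv_ofReal_add (Twist d a w z) t
  -- z-side
  have F1 : (fun ζ => ((t + Twist d a w ζ : ℝ) : ℂ))
      = fun ζ => (t : ℂ) + Complex.I * (∑ j ∈ Finset.Icc 1 d, Acoef d a j 0 ζ * (w - ζ) ^ j)
          - Complex.I * (∑ j ∈ Finset.Icc 1 d, Acoef d a 0 j ζ * (starRingEnd ℂ (w - ζ)) ^ j) :=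
    funext fun ζ => twist_eq d a hsym w ζ t
  have hfz : HasFDerivAt (fun ζ : ℂ =>
        (t : ℂ) + Complex.I * (∑ j ∈ Finset.Icc 1 d, Acoef d a j 0 ζ * (w - ζ) ^ j)
          - Complex.I * (∑ j ∈ Finset.Icc 1 d, Acoef d a 0 j ζ * (starRingEnd ℂ (w - ζ)) ^ j))
      (Lmap (Complex.I * (-Acoef d a 1 0 z)
              - Complex.I * (∑ j ∈ Finset.Icc 1 d, Acoef d a 1 j z * (starRingEnd ℂ (w - z)) ^ j))
            (Complex.I * (∑ j ∈ Finset.Icc 1 d, Acoef d a j 1 z * (w - z) ^ j)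
              - Complex.I * (-Acoef d a 0 1 z))) z := by
    have hg := (hasFDerivAt_g d a w z).const_mul Complex.I
    have hgh := (hasFDerivAt_ghat d a w z).const_mul Complex.I
    rw [Lmap_smul] at hg hgh
    have h := (hg.const_add (t : ℂ)).sub hgh
    rw [Lmap_sub] at h
    exact h
  have e1 : wDz (fun ζ => ((t + Twist d a w ζ : ℝ) : ℂ)) z
      + Complex.I * Acoef d a 1 0 z * deriv (fun s : ℝ => ((s + Twist d a w z : ℝ) : ℂ)) t
      = -Complex.I * ∑ j ∈ Finset.Icc 1 d, Acoef d a 1 j z * (starRingEnd ℂ (w - z)) ^ j := by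
    rw [F1, wDz_eq hfz, hderiv_t]
    ring
  have e2 : wDzbar (fun ζ => ((t + Twist d a w ζ : ℝ) : ℂ)) z
      - Complex.I * Acoef d a 0 1 z * deriv (fun s : ℝ => ((s + Twist d a w z : ℝ) : ℂ)) t
      = Complex.I * ∑ j ∈ Finset.Icc 1 d, Acoef d a j 1 z * (w - z) ^ j := by
    rw [F1, wDzbar_eq hfz, hderiv_t]
    ring
  -- w-side
  have F2 : (fun ω => ((t + Twist d a ω z : ℝ) : ℂ))
      = fun ω => (t : ℂ) + Complex.I * (∑ j ∈ Finset.Icc 1 d, Acoef d a j 0 z * (ω - z) ^ j)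
          - Complex.I * (∑ j ∈ Finset.Icc 1 d, Acoef d a 0 j z * (starRingEnd ℂ (ω - z)) ^ j) :=
    funext fun ω => twist_eq d a hsym ω z t
  have hfw : HasFDerivAt (fun ω : ℂ =>
        (t : ℂ) + Complex.I * (∑ j ∈ Finset.Icc 1 d, Acoef d a j 0 z * (ω - z) ^ j)
          - Complex.I * (∑ j ∈ Finset.Icc 1 d, Acoef d a 0 j z * (starRingEnd ℂ (ω - z)) ^ j))
      (Lmap (Complex.I * (∑ j ∈ Finset.Icc 1 d, (j : ℂ) * Acoef d a j 0 z * (w - z) ^ (j - 1))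
              - Complex.I * 0)
            (Complex.I * 0
              - Complex.I * (∑ j ∈ Finset.Icc 1 d, (j : ℂ) * Acoef d a 0 j z * (starRingEnd ℂ (w - z)) ^ (j - 1)))) w := by
    have hg := (hasFDerivAt_gw d a z w).const_mul Complex.I
    have hgh := (hasFDerivAt_ghatw d a z w).const_mul Complex.I
    rw [Lmap_smul] at hg hgh
    have h := (hg.const_add (t : ℂ)).sub hgh
    rw [Lmap_sub] at h
    exact h
  have hshift10 := Acoef10_shift d a z (w - z)
  rw [show z + (w - z) = w from by ring] at hshift10
  have hshift01 := Acoef01_shift d a z (w - z)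
  rw [show z + (w - z) = w from by ring] at hshift01
  have e3 : wDz (fun ω => ((t + Twist d a ω z : ℝ) : ℂ)) w
      - Complex.I * Acoef d a 1 0 w * deriv (fun s : ℝ => ((s + Twist d a w z : ℝ) : ℂ)) t
      = -Complex.I * ∑ j ∈ Finset.Icc 1 d, ∑ k ∈ Finset.Icc 1 d,
          (j : ℂ) * Acoef d a j k z * (w - z) ^ (j - 1) * (starRingEnd ℂ (w - z)) ^ k := by
    rw [F2, wDz_eq hfw, hderiv_t, hshift10]
    rw [double_split d
      (fun j k => (j : ℂ) * Acoef d a j k z * (w - z) ^ (j - 1) * (starRingEnd ℂ (w - z)) ^ k)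
      (by intro k; simp)]
    have hrw : ∑ j ∈ Finset.Icc 1 d,
        (j : ℂ) * Acoef d a j 0 z * (w - z) ^ (j - 1) * (starRingEnd ℂ (w - z)) ^ 0
        = ∑ j ∈ Finset.Icc 1 d, (j : ℂ) * Acoef d a j 0 z * (w - z) ^ (j - 1) :=
      Finset.sum_congr rfl fun j _ => by rw [pow_zero, mul_one]
    rw [hrw]
    ring
  have e4 : wDzbar (fun ω => ((t + Twist d a ω z : ℝ) : ℂ)) w
      + Complex.I * Acoef d a 0 1 w * deriv (fun s : ℝ => ((s + Twist d a w z : ℝ) : ℂ)) t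
      = Complex.I * ∑ j ∈ Finset.Icc 1 d, ∑ k ∈ Finset.Icc 1 d,
          (k : ℂ) * Acoef d a j k z * (w - z) ^ j * (starRingEnd ℂ (w - z)) ^ (k - 1) := by
    rw [F2, wDzbar_eq hfw, hderiv_t, hshift01]
    rw [double_split' d
      (fun j k => (k : ℂ) * Acoef d a j k z * (w - z) ^ j * (starRingEnd ℂ (w - z)) ^ (k - 1))
      (by intro j; simp)]
    have hrw : ∑ k ∈ Finset.Icc 1 d,
        (k : ℂ) * Acoef d a 0 k z * (w - z) ^ 0 * (starRingEnd ℂ (w - z)) ^ (k - 1)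
        = ∑ k ∈ Finset.Icc 1 d, (k : ℂ) * Acoef d a 0 k z * (starRingEnd ℂ (w - z)) ^ (k - 1) :=
      Finset.sum_congr rfl fun k _ => by rw [pow_zero]; ring
    rw [hrw]
    ring
  -- bounds
  have hpow1 : ∀ j : ℕ, u ^ j ≤ δ ^ (1 + j) / δ := by
    intro j
    have h : δ ^ (1 + j) / δ = δ ^ j := by
      rw [pow_add, pow_one]
      field_simp
    rw [h]
    exact pow_le_pow_left₀ hu0 hXδ j
  have hone : (1 : ℝ) ≤ (d : ℝ) + 1 := by have := Nat.cast_nonneg (α := ℝ) d; linarith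
  refine ⟨?_, ?_, ?_, ?_⟩
  · rw [e1]
    calc Norm.norm (-Complex.I * ∑ j ∈ Finset.Icc 1 d, Acoef d a 1 j z * (starRingEnd ℂ (w - z)) ^ j)
        = Norm.norm (∑ j ∈ Finset.Icc 1 d, Acoef d a 1 j z * (starRingEnd ℂ (w - z)) ^ j) := by
          rw [norm_mul]; simp
      _ ≤ ∑ j ∈ Finset.Icc 1 d, Norm.norm (Acoef d a 1 j z) * u ^ j := by
          refine le_trans (norm_sum_le _ _) (le_of_eq (Finset.sum_congr rfl fun j _ => ?_))
          rw [norm_mul, norm_pow, Complex.norm_conj]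
      _ ≤ (∑ j ∈ Finset.Icc 1 d, Norm.norm (Acoef d a 1 j z) * δ ^ (1 + j)) / δ := by
          rw [Finset.sum_div]
          refine Finset.sum_le_sum fun j hj => ?_
          rw [mul_div_assoc]
          exact mul_le_mul_of_nonneg_left (hpow1 j) (norm_nonneg _)
      _ ≤ Lam d a z δ / δ := by
          have := row_le_Lam d a z δ (le_of_lt hδpos)
          gcongr
      _ ≤ ((d : ℝ) + 1) * Lam d a z δ / δ := by
          have : Lam d a z δ ≤ ((d : ℝ) + 1) * Lam d a z δ := by nlinarith
          gcongr
  · rw [e2]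
    calc Norm.norm (Complex.I * ∑ j ∈ Finset.Icc 1 d, Acoef d a j 1 z * (w - z) ^ j)
        = Norm.norm (∑ j ∈ Finset.Icc 1 d, Acoef d a j 1 z * (w - z) ^ j) := by
          rw [norm_mul]; simp
      _ ≤ ∑ j ∈ Finset.Icc 1 d, Norm.norm (Acoef d a j 1 z) * u ^ j := by
          refine le_trans (norm_sum_le _ _) (le_of_eq (Finset.sum_congr rfl fun j _ => ?_))
          rw [norm_mul, norm_pow]
      _ ≤ (∑ j ∈ Finset.Icc 1 d, Norm.norm (Acoef d a j 1 z) * δ ^ (j + 1)) / δ := by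
          rw [Finset.sum_div]
          refine Finset.sum_le_sum fun j hj => ?_
          rw [mul_div_assoc]
          rw [show j + 1 = 1 + j from by omega]
          exact mul_le_mul_of_nonneg_left (hpow1 j) (norm_nonneg _)
      _ ≤ Lam d a z δ / δ := by
          have := col_le_Lam d a z δ (le_of_lt hδpos)
          gcongr
      _ ≤ ((d : ℝ) + 1) * Lam d a z δ / δ := by
          have : Lam d a z δ ≤ ((d : ℝ) + 1) * Lam d a z δ := by nlinarith
          gcongr
  · rw [e3]
    calc Norm.norm (-Complex.I * ∑ j ∈ Finset.Icc 1 d, ∑ k ∈ Finset.Icc 1 d,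
          (j : ℂ) * Acoef d a j k z * (w - z) ^ (j - 1) * (starRingEnd ℂ (w - z)) ^ k)
        = Norm.norm (∑ j ∈ Finset.Icc 1 d, ∑ k ∈ Finset.Icc 1 d,
          (j : ℂ) * Acoef d a j k z * (w - z) ^ (j - 1) * (starRingEnd ℂ (w - z)) ^ k) := by
          rw [norm_mul]; simp
      _ ≤ ∑ j ∈ Finset.Icc 1 d, ∑ k ∈ Finset.Icc 1 d,
            (j : ℝ) * Norm.norm (Acoef d a j k z) * u ^ (j - 1) * u ^ k := by
          refine le_trans (norm_sum_le _ _) (Finset.sum_le_sum fun j _ => ?_)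
          refine le_trans (norm_sum_le _ _) (le_of_eq (Finset.sum_congr rfl fun k _ => ?_))
          rw [norm_mul, norm_mul, norm_mul, norm_pow, norm_pow, Complex.norm_conj, Complex.norm_natCast]
      _ ≤ ∑ j ∈ Finset.Icc 1 d, ∑ k ∈ Finset.Icc 1 d,
            (d : ℝ) * (Norm.norm (Acoef d a j k z) * δ ^ (j + k)) / δ := by
          refine Finset.sum_le_sum fun j hj => Finset.sum_le_sum fun k _ => ?_
          have hj1 : 1 ≤ j := (Finset.mem_Icc.1 hj).1
          have hjd : (j : ℝ) ≤ (d : ℝ) := Nat.cast_le.2 (Finset.mem_Icc.1 hj).2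
          have hb : u ^ (j - 1) * u ^ k ≤ δ ^ (j + k) / δ := by
            rw [← pow_add]
            have h : δ ^ (j + k) / δ = δ ^ (j - 1 + k) := by
              rw [show j + k = (j - 1 + k) + 1 from by omega, pow_succ]
              field_simp
            rw [h]
            exact pow_le_pow_left₀ hu0 hXδ _
          have h1 : (j : ℝ) * Norm.norm (Acoef d a j k z) * u ^ (j - 1) * u ^ k
              = ((j : ℝ) * Norm.norm (Acoef d a j k z)) * (u ^ (j - 1) * u ^ k) := by ring
          have h2 : (d : ℝ) * (Norm.norm (Acoef d a j k z) * δ ^ (j + k)) / δ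
              = ((d : ℝ) * Norm.norm (Acoef d a j k z)) * (δ ^ (j + k) / δ) := by ring
          rw [h1, h2]
          exact mul_le_mul (mul_le_mul_of_nonneg_right hjd (norm_nonneg _)) hb
            (by positivity) (by positivity)
      _ = (d : ℝ) * Lam d a z δ / δ := by
          rw [Lam, Finset.mul_sum, Finset.sum_div]
          refine Finset.sum_congr rfl fun j _ => ?_
          rw [Finset.mul_sum, Finset.sum_div]
      _ ≤ ((d : ℝ) + 1) * Lam d a z δ / δ := by
          have hd : (d : ℝ) ≤ (d : ℝ) + 1 := by linarith
          gcongr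
  · rw [e4]
    calc Norm.norm (Complex.I * ∑ j ∈ Finset.Icc 1 d, ∑ k ∈ Finset.Icc 1 d,
          (k : ℂ) * Acoef d a j k z * (w - z) ^ j * (starRingEnd ℂ (w - z)) ^ (k - 1))
        = Norm.norm (∑ j ∈ Finset.Icc 1 d, ∑ k ∈ Finset.Icc 1 d,
          (k : ℂ) * Acoef d a j k z * (w - z) ^ j * (starRingEnd ℂ (w - z)) ^ (k - 1)) := by
          rw [norm_mul]; simp
      _ ≤ ∑ j ∈ Finset.Icc 1 d, ∑ k ∈ Finset.Icc 1 d,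
            (k : ℝ) * Norm.norm (Acoef d a j k z) * u ^ j * u ^ (k - 1) := by
          refine le_trans (norm_sum_le _ _) (Finset.sum_le_sum fun j _ => ?_)
          refine le_trans (norm_sum_le _ _) (le_of_eq (Finset.sum_congr rfl fun k _ => ?_))
          rw [norm_mul, norm_mul, norm_mul, norm_pow, norm_pow, Complex.norm_conj, Complex.norm_natCast]
      _ ≤ ∑ j ∈ Finset.Icc 1 d, ∑ k ∈ Finset.Icc 1 d,
            (d : ℝ) * (Norm.norm (Acoef d a j k z) * δ ^ (j + k)) / δ := by
          refine Finset.sum_le_sum fun j _ => Finset.sum_le_sum fun k hk => ?_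
          have hk1 : 1 ≤ k := (Finset.mem_Icc.1 hk).1
          have hkd : (k : ℝ) ≤ (d : ℝ) := Nat.cast_le.2 (Finset.mem_Icc.1 hk).2
          have hb : u ^ j * u ^ (k - 1) ≤ δ ^ (j + k) / δ := by
            rw [← pow_add]
            have h : δ ^ (j + k) / δ = δ ^ (j + (k - 1)) := by
              rw [show j + k = (j + (k - 1)) + 1 from by omega, pow_succ]
              field_simp
            rw [h]
            exact pow_le_pow_left₀ hu0 hXδ _
          have h1 : (k : ℝ) * Norm.norm (Acoef d a j k z) * u ^ j * u ^ (k - 1)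
              = ((k : ℝ) * Norm.norm (Acoef d a j k z)) * (u ^ j * u ^ (k - 1)) := by ring
          have h2 : (d : ℝ) * (Norm.norm (Acoef d a j k z) * δ ^ (j + k)) / δ
              = ((d : ℝ) * Norm.norm (Acoef d a j k z)) * (δ ^ (j + k) / δ) := by ring
          rw [h1, h2]
          exact mul_le_mul (mul_le_mul_of_nonneg_right hkd (norm_nonneg _)) hb
            (by positivity) (by positivity)
      _ = (d : ℝ) * Lam d a z δ / δ := by
          rw [Lam, Finset.mul_sum, Finset.sum_div]
          refine Finset.sum_congr rfl fun j _ => ?_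
          rw [Finset.mul_sum, Finset.sum_div]
      _ ≤ ((d : ℝ) + 1) * Lam d a z δ / δ := by
          have hd : (d : ℝ) ≤ (d : ℝ) + 1 := by linarith
          gcongr
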